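/- Define a_p(z,w) = -(ln|ln|z|²|)^p (ln|ln|w|²|)^p for (z,w) ∈ ℂ² with 0 < |z|, |w| < 1/2. Then the (1,1)-form i ∂∂̄ a_p(z,w) is positive in a sufficiently small neighborhood of the origin minus the coordinate axes; more precisely, its dominating terms are i·p(ln|ln|z|²|)^{p-1}(ln|ln|w|²|)^{p-1}·[(ln|ln|z|²|) dw dw̄/|w ln|w|²|² + (ln|ln|w|²|) dz dz̄/|z ln|z|²|²], which dominate the cross terms near (0,0). -/

import Mathlib

/-- The function `a_p(z,w) = -(ln|ln|z|²|)^p (ln|ln|w|²|)^p`. -/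
noncomputable def apFun (p : ℕ) (x : ℂ × ℂ) : ℝ :=
  -((Real.log |Real.log (‖x.1‖ ^ 2)|) ^ p * (Real.log |Real.log (‖x.2‖ ^ 2)|) ^ p)

/-- The Levi form of a function `f : ℂ² → ℝ` at `x` evaluated at a tangent vector `v`:
`D²f(x)(v,v) + D²f(x)(iv,iv)`, which equals `4·Σ_{jk} (∂∂̄f)_{jk} v_j v̄_k` for smooth `f`.
Its nonnegativity for all `v` expresses positivity of the `(1,1)`-form `i∂∂̄f` at `x`. -/
noncomputable def leviForm2 (f : ℂ × ℂ → ℝ) (x v : ℂ × ℂ) : ℝ :=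
  iteratedFDeriv ℝ 2 f x ![v, v] +
    iteratedFDeriv ℝ 2 f x ![Complex.I • v, Complex.I • v]

open Real Filter Topology Complex

set_option maxHeartbeats 2000000

/-! ### Reduction of the second derivative along a line to 1-dimensional calculus -/

lemma levi_bridge {f : ℂ × ℂ → ℝ} {x v : ℂ × ℂ} (hf : ContDiffAt ℝ 2 f x)
    {g' : ℝ → ℝ} {c : ℝ}
    (h1 : ∀ᶠ t in 𝓝 (0:ℝ), HasDerivAt (fun s => f (x + s • v)) (g' t) t)
    (h2 : HasDerivAt g' c 0) :
    iteratedFDeriv ℝ 2 f x ![v, v] = c := by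
  have hline : ∀ t : ℝ, HasDerivAt (fun s : ℝ => x + s • v) v t := by
    intro t
    simpa using ((hasDerivAt_id t).smul_const v).const_add x
  have hΦ : DifferentiableAt ℝ (fderiv ℝ f) x := by
    have := hf.fderiv_right (m := 1) (by norm_num)
    exact this.differentiableAt (by norm_num)
  have hev : ∀ᶠ y in 𝓝 x, DifferentiableAt ℝ f y := by
    have h := hf.eventually (by simp)
    exact h.mono fun y hy => hy.differentiableAt (by norm_num)
  have hevt : ∀ᶠ t in 𝓝 (0:ℝ), g' t = fderiv ℝ f (x + t • v) v := by
    have hcont : ContinuousAt (fun t : ℝ => x + t • v) 0 := ((hline 0).continuousAt)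
    have h3 : ∀ᶠ t in 𝓝 (0:ℝ), DifferentiableAt ℝ f (x + t • v) := by
      have ht : Tendsto (fun t : ℝ => x + t • v) (𝓝 0) (𝓝 x) := by
        simpa using hcont.tendsto
      exact ht.eventually hev
    filter_upwards [h1, h3] with t ht hd
    have : HasDerivAt (fun s => f (x + s • v)) (fderiv ℝ f (x + t • v) v) t :=
      hd.hasFDerivAt.comp_hasDerivAt t (hline t)
    exact ht.unique this
  have h4 : HasDerivAt (fun t : ℝ => fderiv ℝ f (x + t • v) v)
      (fderiv ℝ (fderiv ℝ f) x v v) 0 := by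
    have hΦ' : HasFDerivAt (fderiv ℝ f) (fderiv ℝ (fderiv ℝ f) x) (x + (0:ℝ) • v) := by
      simpa using hΦ.hasFDerivAt
    have hΦc : HasDerivAt (fun t : ℝ => fderiv ℝ f (x + t • v))
        (fderiv ℝ (fderiv ℝ f) x v) 0 := by
      have := hΦ'.comp_hasDerivAt (f := fun t : ℝ => x + t • v) 0
        (by simpa using hline 0)
      exact this
    have := (ContinuousLinearMap.apply ℝ ℝ v).hasFDerivAt.comp_hasDerivAt 0 hΦc
    exact this
  have h5 : HasDerivAt g' (fderiv ℝ (fderiv ℝ f) x v v) 0 := by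
    apply h4.congr_of_eventuallyEq
    filter_upwards [hevt] with t ht
    exact ht
  have hc := h5.unique h2
  rw [iteratedFDeriv_two_apply]
  simpa using hc

/-! ### Explicit one-dimensional derivatives -/

/-- Path factor `t ↦ (log log ‖z+tu‖²)^p` where `‖z+tu‖² = r2 + b t + n t²`. -/
noncomputable def Gf (p : ℕ) (r2 b n : ℝ) : ℝ → ℝ :=
  fun t => (Real.log (Real.log (r2 + b*t + n*t^2)))^p

noncomputable def Gf' (p : ℕ) (r2 b n : ℝ) : ℝ → ℝ :=
  fun t => (p:ℝ) * (Real.log (Real.log (r2 + b*t + n*t^2)))^(p-1) *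
    ((b + 2*n*t) / ((r2 + b*t + n*t^2) * Real.log (r2 + b*t + n*t^2)))

noncomputable def Gf'' (p : ℕ) (r2 b n : ℝ) : ℝ → ℝ :=
  fun t =>
    (p:ℝ) * ((p-1:ℕ):ℝ) * (Real.log (Real.log (r2 + b*t + n*t^2)))^(p-1-1) *
      (b + 2*n*t)^2 / ((r2 + b*t + n*t^2) * Real.log (r2 + b*t + n*t^2))^2
    + (p:ℝ) * (Real.log (Real.log (r2 + b*t + n*t^2)))^(p-1) *
      ((2*n*((r2 + b*t + n*t^2) * Real.log (r2 + b*t + n*t^2))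
        - (b + 2*n*t)^2*(Real.log (r2 + b*t + n*t^2) + 1))
       / ((r2 + b*t + n*t^2) * Real.log (r2 + b*t + n*t^2))^2)

lemma hasDerivAt_poly (r2 b n t : ℝ) :
    HasDerivAt (fun t => r2 + b*t + n*t^2) (b + 2*n*t) t := by
  have h := (((hasDerivAt_id t).const_mul b).const_add r2).add
    ((hasDerivAt_pow 2 t).const_mul n)
  refine h.congr_deriv ?_
  push_cast
  ring

lemma hasDerivAt_logq (r2 b n t : ℝ) (hq : r2 + b*t + n*t^2 ≠ 0) :
    HasDerivAt (fun t => Real.log (r2 + b*t + n*t^2))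
      ((b + 2*n*t) / (r2 + b*t + n*t^2)) t := by
  have h := (Real.hasDerivAt_log hq).comp t (hasDerivAt_poly r2 b n t)
  refine h.congr_deriv ?_
  rw [div_eq_inv_mul]

lemma hasDerivAt_loglogq (r2 b n t : ℝ) (hq : r2 + b*t + n*t^2 ≠ 0)
    (hs : Real.log (r2 + b*t + n*t^2) ≠ 0) :
    HasDerivAt (fun t => Real.log (Real.log (r2 + b*t + n*t^2)))
      ((b + 2*n*t) / ((r2 + b*t + n*t^2) * Real.log (r2 + b*t + n*t^2))) t := by
  have h := (Real.hasDerivAt_log hs).comp t (hasDerivAt_logq r2 b n t hq)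
  refine h.congr_deriv ?_
  rw [inv_mul_eq_div, div_div]

lemma hasDerivAt_Gf (p : ℕ) (r2 b n t : ℝ) (hq : r2 + b*t + n*t^2 ≠ 0)
    (hs : Real.log (r2 + b*t + n*t^2) ≠ 0) :
    HasDerivAt (Gf p r2 b n) (Gf' p r2 b n t) t := by
  have h := (hasDerivAt_loglogq r2 b n t hq hs).pow p
  refine h.congr_deriv ?_
  simp only [Gf']

lemma hasDerivAt_Gf' (p : ℕ) (r2 b n t : ℝ) (hq : r2 + b*t + n*t^2 ≠ 0)
    (hs : Real.log (r2 + b*t + n*t^2) ≠ 0) :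
    HasDerivAt (Gf' p r2 b n) (Gf'' p r2 b n t) t := by
  have hB : HasDerivAt (fun t : ℝ => b + 2*n*t) (2*n) t := by
    simpa using ((hasDerivAt_id t).const_mul (2*n)).const_add b
  have hq' := hasDerivAt_poly r2 b n t
  have hs' := hasDerivAt_logq r2 b n t hq
  have hden : HasDerivAt (fun t => (r2 + b*t + n*t^2) * Real.log (r2 + b*t + n*t^2))
      ((b + 2*n*t) * Real.log (r2 + b*t + n*t^2)
        + (r2 + b*t + n*t^2) * ((b + 2*n*t) / (r2 + b*t + n*t^2))) t :=
    hq'.mul hs'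
  have hdenne : (r2 + b*t + n*t^2) * Real.log (r2 + b*t + n*t^2) ≠ 0 :=
    mul_ne_zero hq hs
  have hfrac := hB.div hden hdenne
  have hpow := (hasDerivAt_loglogq r2 b n t hq hs).pow (p-1)
  have h := (hpow.mul hfrac).const_mul (p:ℝ)
  have hfun : Gf' p r2 b n = fun y => (p:ℝ) *
      (Real.log (Real.log (r2 + b*y + n*y^2))^(p-1) *
        ((b + 2*n*y) / ((r2 + b*y + n*y^2) * Real.log (r2 + b*y + n*y^2)))) := by
    funext y
    simp [Gf', mul_assoc]
  rw [hfun]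
  refine h.congr_deriv ?_
  simp only [Gf'', Pi.div_apply, Pi.pow_apply]
  rw [mul_div_cancel₀ _ hq]
  field_simp

/-! ### Geometry of the complex line -/

lemma apFun_eq (p : ℕ) :
    apFun p = fun x : ℂ × ℂ =>
      -((Real.log (Real.log (Complex.normSq x.1)))^p
        * (Real.log (Real.log (Complex.normSq x.2)))^p) := by
  funext x
  simp only [apFun]
  rw [Real.log_abs, Real.log_abs,
    Complex.sq_norm, Complex.sq_norm]

lemma normSq_line (z u : ℂ) (t : ℝ) :
    Complex.normSq (z + t • u)
      = Complex.normSq z + (2*(z*(starRingEnd ℂ) u).re)*t + Complex.normSq u * t^2 := by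
  simp [Complex.normSq_apply, Complex.add_re, Complex.add_im, Complex.smul_re,
    Complex.smul_im, Complex.mul_re, Complex.conj_re, Complex.conj_im]
  ring

lemma coef_I_b (z u : ℂ) :
    2*((z*(starRingEnd ℂ) (Complex.I • u)).re) = 2*(z*(starRingEnd ℂ) u).im := by
  simp [Complex.mul_re, Complex.mul_im, Complex.conj_re, Complex.conj_im]
  ring

lemma coef_I_n (u : ℂ) : Complex.normSq (Complex.I • u) = Complex.normSq u := by
  simp [Complex.normSq_apply]
  ring

lemma coef_sq (z u : ℂ) :
    (2*(z*(starRingEnd ℂ) u).re)^2 + (2*(z*(starRingEnd ℂ) u).im)^2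
      = 4*Complex.normSq z*Complex.normSq u := by
  calc (2*(z*(starRingEnd ℂ) u).re)^2 + (2*(z*(starRingEnd ℂ) u).im)^2
      = 4*((z*(starRingEnd ℂ) u).re*(z*(starRingEnd ℂ) u).re
          + (z*(starRingEnd ℂ) u).im*(z*(starRingEnd ℂ) u).im) := by ring
    _ = 4*Complex.normSq (z*(starRingEnd ℂ) u) := by rw [Complex.normSq_apply]
    _ = 4*Complex.normSq z*Complex.normSq u := by
        rw [Complex.normSq_mul, Complex.normSq_conj]; ring

/-! ### Smoothness -/

lemma contDiff_normSq' : ContDiff ℝ 2 (fun z : ℂ => Complex.normSq z) := by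
  have h : (fun z : ℂ => Complex.normSq z)
      = fun z : ℂ => Complex.reCLM z * Complex.reCLM z + Complex.imCLM z * Complex.imCLM z := by
    funext z
    simp [Complex.normSq_apply]
  rw [h]
  exact (Complex.reCLM.contDiff.mul Complex.reCLM.contDiff).add
    (Complex.imCLM.contDiff.mul Complex.imCLM.contDiff)

lemma contDiffAt_loglognormSq {z : ℂ} (h1 : Complex.normSq z ≠ 0)
    (hs1 : Real.log (Complex.normSq z) ≠ 0) :
    ContDiffAt ℝ 2 (fun w : ℂ => Real.log (Real.log (Complex.normSq w))) z := by
  have a1 : ContDiffAt ℝ 2 (fun w : ℂ => Complex.normSq w) z := contDiff_normSq'.contDiffAt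
  have a2 := (Real.contDiffAt_log.2 h1).comp z a1
  exact (Real.contDiffAt_log.2 hs1).comp z a2

lemma contDiffAt_big (p : ℕ) (x : ℂ × ℂ) (h1 : Complex.normSq x.1 ≠ 0)
    (hs1 : Real.log (Complex.normSq x.1) ≠ 0) (h2 : Complex.normSq x.2 ≠ 0)
    (hs2 : Real.log (Complex.normSq x.2) ≠ 0) :
    ContDiffAt ℝ 2 (fun x : ℂ × ℂ =>
      -((Real.log (Real.log (Complex.normSq x.1)))^p
        * (Real.log (Real.log (Complex.normSq x.2)))^p)) x := by
  have c1 : ContDiffAt ℝ 2 (fun x : ℂ × ℂ => Real.log (Real.log (Complex.normSq x.1))) x :=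
    (contDiffAt_loglognormSq h1 hs1).comp x contDiffAt_fst
  have c2 : ContDiffAt ℝ 2 (fun x : ℂ × ℂ => Real.log (Real.log (Complex.normSq x.2))) x :=
    (contDiffAt_loglognormSq h2 hs2).comp x contDiffAt_snd
  exact ((c1.pow p).mul (c2.pow p)).neg

/-! ### The second derivative along a line, explicitly -/

lemma path_eq (p : ℕ) (x v : ℂ × ℂ) (hQ1 : 0 < Complex.normSq x.1)
    (hS1 : Real.log (Complex.normSq x.1) ≠ 0) (hQ2 : 0 < Complex.normSq x.2)
    (hS2 : Real.log (Complex.normSq x.2) ≠ 0) :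
    iteratedFDeriv ℝ 2 (apFun p) x ![v, v]
      = -(Gf'' p (Complex.normSq x.1) (2*(x.1*(starRingEnd ℂ) v.1).re) (Complex.normSq v.1) 0
            * Gf p (Complex.normSq x.2) (2*(x.2*(starRingEnd ℂ) v.2).re) (Complex.normSq v.2) 0
          + 2*(Gf' p (Complex.normSq x.1) (2*(x.1*(starRingEnd ℂ) v.1).re) (Complex.normSq v.1) 0
            * Gf' p (Complex.normSq x.2) (2*(x.2*(starRingEnd ℂ) v.2).re) (Complex.normSq v.2) 0)
          + Gf p (Complex.normSq x.1) (2*(x.1*(starRingEnd ℂ) v.1).re) (Complex.normSq v.1) 0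
            * Gf'' p (Complex.normSq x.2) (2*(x.2*(starRingEnd ℂ) v.2).re) (Complex.normSq v.2) 0) := by
  set Q1 := Complex.normSq x.1 with hQ1def
  set Q2 := Complex.normSq x.2 with hQ2def
  set b1 := 2*(x.1*(starRingEnd ℂ) v.1).re with hb1def
  set b2 := 2*(x.2*(starRingEnd ℂ) v.2).re with hb2def
  set n1 := Complex.normSq v.1 with hn1def
  set n2 := Complex.normSq v.2 with hn2def
  rw [apFun_eq]
  apply levi_bridge (contDiffAt_big p x (ne_of_gt hQ1) hS1 (ne_of_gt hQ2) hS2)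
    (g' := fun t => -(Gf' p Q1 b1 n1 t * Gf p Q2 b2 n2 t + Gf p Q1 b1 n1 t * Gf' p Q2 b2 n2 t))
  · -- eventual first derivative
    have hfun : (fun s : ℝ => -((Real.log (Real.log (Complex.normSq (x + s • v).1)))^p
        * (Real.log (Real.log (Complex.normSq (x + s • v).2)))^p))
        = fun s : ℝ => -(Gf p Q1 b1 n1 s * Gf p Q2 b2 n2 s) := by
      funext s
      have e1 : (x + s • v).1 = x.1 + s • v.1 := rfl
      have e2 : (x + s • v).2 = x.2 + s • v.2 := rfl
      rw [e1, e2, normSq_line, normSq_line]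
      simp only [Gf]
      rfl
    have hq1c : Continuous (fun t : ℝ => Q1 + b1*t + n1*t^2) := by continuity
    have hq2c : Continuous (fun t : ℝ => Q2 + b2*t + n2*t^2) := by continuity
    have h01 : Q1 + b1*0 + n1*0^2 = Q1 := by ring
    have h02 : Q2 + b2*0 + n2*0^2 = Q2 := by ring
    have hev1 : ∀ᶠ t in 𝓝 (0:ℝ), 0 < Q1 + b1*t + n1*t^2 := by
      refine (hq1c.tendsto 0).eventually (eventually_gt_nhds ?_)
      rw [h01]; exact hQ1
    have hev2 : ∀ᶠ t in 𝓝 (0:ℝ), 0 < Q2 + b2*t + n2*t^2 := by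
      refine (hq2c.tendsto 0).eventually (eventually_gt_nhds ?_)
      rw [h02]; exact hQ2
    have hevs1 : ∀ᶠ t in 𝓝 (0:ℝ), Real.log (Q1 + b1*t + n1*t^2) ≠ 0 := by
      have hc : ContinuousAt (fun t : ℝ => Real.log (Q1 + b1*t + n1*t^2)) 0 := by
        apply (Real.continuousAt_log ?_).comp hq1c.continuousAt
        rw [h01]; exact ne_of_gt hQ1
      have := hc.tendsto
      rw [h01] at this
      exact this.eventually_ne hS1
    have hevs2 : ∀ᶠ t in 𝓝 (0:ℝ), Real.log (Q2 + b2*t + n2*t^2) ≠ 0 := by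
      have hc : ContinuousAt (fun t : ℝ => Real.log (Q2 + b2*t + n2*t^2)) 0 := by
        apply (Real.continuousAt_log ?_).comp hq2c.continuousAt
        rw [h02]; exact ne_of_gt hQ2
      have := hc.tendsto
      rw [h02] at this
      exact this.eventually_ne hS2
    filter_upwards [hev1, hev2, hevs1, hevs2] with t ht1 ht2 hts1 hts2
    rw [show (fun s : ℝ => -((Real.log (Real.log (Complex.normSq (x + s • v).1)))^p
        * (Real.log (Real.log (Complex.normSq (x + s • v).2)))^p))
        = fun s : ℝ => -(Gf p Q1 b1 n1 s * Gf p Q2 b2 n2 s) from hfun]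
    exact ((hasDerivAt_Gf p Q1 b1 n1 t (ne_of_gt ht1) hts1).mul
      (hasDerivAt_Gf p Q2 b2 n2 t (ne_of_gt ht2) hts2)).neg
  · -- second derivative at 0
    have h01 : Q1 + b1*0 + n1*0^2 = Q1 := by ring
    have h02 : Q2 + b2*0 + n2*0^2 = Q2 := by ring
    have hq10 : Q1 + b1*0 + n1*0^2 ≠ 0 := by rw [h01]; exact ne_of_gt hQ1
    have hq20 : Q2 + b2*0 + n2*0^2 ≠ 0 := by rw [h02]; exact ne_of_gt hQ2
    have hs10 : Real.log (Q1 + b1*0 + n1*0^2) ≠ 0 := by rw [h01]; exact hS1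
    have hs20 : Real.log (Q2 + b2*0 + n2*0^2) ≠ 0 := by rw [h02]; exact hS2
    have h := (((hasDerivAt_Gf' p Q1 b1 n1 0 hq10 hs10).mul
        (hasDerivAt_Gf p Q2 b2 n2 0 hq20 hs20)).add
      ((hasDerivAt_Gf p Q1 b1 n1 0 hq10 hs10).mul
        (hasDerivAt_Gf' p Q2 b2 n2 0 hq20 hs20))).neg
    refine h.congr_deriv ?_
    ring

/-! ### Algebraic positivity -/

lemma alpha_bound (p : ℕ) (hp : 1 ≤ p) (L : ℝ) (hL : 2*(p:ℝ)+1 ≤ L) :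
    (p:ℝ)*((p-1:ℕ):ℝ)*L^(p-1-1)*2 ≤ (p:ℝ)*L^(p-1) := by
  match p, hp with
  | 1, _ => norm_num
  | (k+2), _ =>
    have hL0 : (0:ℝ) ≤ L := by
      have : (0:ℝ) ≤ (k:ℝ) := Nat.cast_nonneg k
      push_cast at hL
      linarith
    have hLk : (0:ℝ) ≤ L^k := pow_nonneg hL0 k
    have h1 : ((k:ℝ)+1)*2 ≤ L := by push_cast at hL; linarith
    have hidx1 : k+2-1 = k+1 := rfl
    rw [hidx1, Nat.add_sub_cancel, pow_succ]
    have hk2 : (0:ℝ) ≤ (k:ℝ)+2 := by positivity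
    push_cast
    nlinarith [mul_nonneg (mul_nonneg hk2 hLk) (by linarith : (0:ℝ) ≤ L - ((k:ℝ)+1)*2)]

lemma sos_ineq (A B K e1 f1 e2 f2 : ℝ) (hA : 0 < A) (hAB : K^2 ≤ A*B) :
    0 ≤ A*(e1^2+f1^2) + B*(e2^2+f2^2) - 2*K*(e1*e2+f1*f2) := by
  have key : 0 ≤ A * (A*(e1^2+f1^2) + B*(e2^2+f2^2) - 2*K*(e1*e2+f1*f2)) := by
    nlinarith [sq_nonneg (A*e1 - K*e2), sq_nonneg (A*f1 - K*f2),
      mul_nonneg (sub_nonneg.2 hAB) (add_nonneg (sq_nonneg e2) (sq_nonneg f2))]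
  have h0 : A * 0 ≤ A * (A*(e1^2+f1^2) + B*(e2^2+f2^2) - 2*K*(e1*e2+f1*f2)) := by
    simpa using key
  exact le_of_mul_le_mul_left h0 hA

lemma final_ineq (p : ℕ) (hp : 1 ≤ p) (Q1 Q2 b1 c1 b2 c2 n1 n2 : ℝ)
    (hQ1 : 0 < Q1) (hQ2 : 0 < Q2)
    (hS1neg : Real.log Q1 < 0) (hS2neg : Real.log Q2 < 0)
    (hL1 : 2*(p:ℝ)+1 ≤ Real.log (Real.log Q1))
    (hL2 : 2*(p:ℝ)+1 ≤ Real.log (Real.log Q2))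
    (hb1 : b1^2 + c1^2 = 4*Q1*n1) (hb2 : b2^2 + c2^2 = 4*Q2*n2) :
    0 ≤ -(Gf'' p Q1 b1 n1 0 * Gf p Q2 b2 n2 0
          + 2*(Gf' p Q1 b1 n1 0 * Gf' p Q2 b2 n2 0)
          + Gf p Q1 b1 n1 0 * Gf'' p Q2 b2 n2 0)
      + -(Gf'' p Q1 c1 n1 0 * Gf p Q2 c2 n2 0
          + 2*(Gf' p Q1 c1 n1 0 * Gf' p Q2 c2 n2 0)
          + Gf p Q1 c1 n1 0 * Gf'' p Q2 c2 n2 0) := by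
  have g0 : ∀ Q b n : ℝ, Gf p Q b n 0 = (Real.log (Real.log Q))^p := by
    intro Q b n; simp [Gf]
  have g1 : ∀ Q b n : ℝ, Gf' p Q b n 0
      = (p:ℝ) * (Real.log (Real.log Q))^(p-1) * (b/(Q*Real.log Q)) := by
    intro Q b n; simp [Gf']
  have g2 : ∀ Q b n : ℝ, Gf'' p Q b n 0
      = (p:ℝ)*((p-1:ℕ):ℝ)*(Real.log (Real.log Q))^(p-1-1)*b^2/(Q*Real.log Q)^2
        + (p:ℝ)*(Real.log (Real.log Q))^(p-1)
          *((2*n*(Q*Real.log Q) - b^2*(Real.log Q+1))/(Q*Real.log Q)^2) := by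
    intro Q b n; simp [Gf'']
  simp only [g0, g1, g2]
  set S1 := Real.log Q1 with hS1def
  set S2 := Real.log Q2 with hS2def
  set L1 := Real.log S1 with hL1def
  set L2 := Real.log S2 with hL2def
  have hQ1' : Q1 ≠ 0 := ne_of_gt hQ1
  have hQ2' : Q2 ≠ 0 := ne_of_gt hQ2
  have hS1' : S1 ≠ 0 := ne_of_lt hS1neg
  have hS2' : S2 ≠ 0 := ne_of_lt hS2neg
  have hp' : (1:ℝ) ≤ (p:ℝ) := by exact_mod_cast hp
  have hL1pos : 0 < L1 := by linarith
  have hL2pos : 0 < L2 := by linarith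
  have hP1 : 0 < L1^(p-1) := pow_pos hL1pos _
  have hP2 : 0 < L2^(p-1) := pow_pos hL2pos _
  have hL1p : L1^p = L1^(p-1) * L1 := by
    conv_lhs => rw [show p = (p-1)+1 from (Nat.succ_pred_eq_of_pos hp).symm]
    rw [pow_succ]
  have hL2p : L2^p = L2^(p-1) * L2 := by
    conv_lhs => rw [show p = (p-1)+1 from (Nat.succ_pred_eq_of_pos hp).symm]
    rw [pow_succ]
  have hn1 : n1 = (b1^2+c1^2)/(4*Q1) := by field_simp; linarith
  have hn2 : n2 = (b2^2+c2^2)/(4*Q2) := by field_simp; linarith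
  subst hn1 hn2
  set A := ((p:ℝ)*L1^(p-1) - (p:ℝ)*((p-1:ℕ):ℝ)*L1^(p-1-1)) * L2^p with hAdef
  set B := ((p:ℝ)*L2^(p-1) - (p:ℝ)*((p-1:ℕ):ℝ)*L2^(p-1-1)) * L1^p with hBdef
  set K := (p:ℝ)^2 * L1^(p-1) * L2^(p-1) with hKdef
  have ha1 : (p:ℝ)*L1^(p-1)/2 ≤ (p:ℝ)*L1^(p-1) - (p:ℝ)*((p-1:ℕ):ℝ)*L1^(p-1-1) := by
    have := alpha_bound p hp L1 hL1
    linarith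
  have ha2 : (p:ℝ)*L2^(p-1)/2 ≤ (p:ℝ)*L2^(p-1) - (p:ℝ)*((p-1:ℕ):ℝ)*L2^(p-1-1) := by
    have := alpha_bound p hp L2 hL2
    linarith
  have hA : 0 < A := by
    apply mul_pos _ (by rw [hL2p]; positivity)
    calc (0:ℝ) < (p:ℝ)*L1^(p-1)/2 := by positivity
    _ ≤ _ := ha1
  have hAB : K^2 ≤ A*B := by
    have hlow1 : (p:ℝ)*L1^(p-1)/2 * L2^p ≤ A :=
      mul_le_mul_of_nonneg_right ha1 (by rw [hL2p]; positivity)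
    have hlow2 : (p:ℝ)*L2^(p-1)/2 * L1^p ≤ B :=
      mul_le_mul_of_nonneg_right ha2 (by rw [hL1p]; positivity)
    have hprod : ((p:ℝ)*L1^(p-1)/2 * L2^p) * ((p:ℝ)*L2^(p-1)/2 * L1^p) ≤ A*B := by
      apply mul_le_mul hlow1 hlow2 (by rw [hL1p]; positivity) hA.le
    refine le_trans ?_ hprod
    rw [hKdef, hL1p, hL2p]
    have h12 : 4*(p:ℝ)^2 ≤ L1*L2 := by nlinarith
    nlinarith [mul_le_mul_of_nonneg_left h12
      (show (0:ℝ) ≤ (p:ℝ)^2/4*(L1^(p-1))^2*(L2^(p-1))^2 by positivity)]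
  have hsos := sos_ineq A B K (b1/(Q1*S1)) (c1/(Q1*S1)) (b2/(Q2*S2)) (c2/(Q2*S2)) hA hAB
  refine le_of_le_of_eq hsos ?_
  rw [hAdef, hBdef, hKdef]
  field_simp
  ring

/-! ### Main theorem -/

/-- For `p ≥ 1`, the `(1,1)`-form `i∂∂̄ a_p(z,w)` is positive in a sufficiently small
neighborhood of the origin minus the coordinate axes. -/
theorem stmt8 (p : ℕ) (hp : 1 ≤ p) :
    ∃ ε > 0, ∀ x : ℂ × ℂ,
      0 < ‖x.1‖ → ‖x.1‖ < ε → 0 < ‖x.2‖ → ‖x.2‖ < ε →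
      ∀ v : ℂ × ℂ, 0 ≤ leviForm2 (apFun p) x v := by
  set E := Real.exp (2*(p:ℝ)+1) with hEdef
  have hEpos : 0 < E := Real.exp_pos _
  refine ⟨min (1/2) (Real.exp (-E)), by positivity, ?_⟩
  intro x h1 h2 h3 h4 v
  set ε := min (1/2) (Real.exp (-E)) with hεdef
  have hεpos : 0 < ε := by positivity
  -- basic facts about the point
  have hx1 : x.1 ≠ 0 := by
    intro h; rw [h] at h1; simp at h1
  have hx2 : x.2 ≠ 0 := by
    intro h; rw [h] at h3; simp at h3
  have hQ1 : 0 < Complex.normSq x.1 := Complex.normSq_pos.2 hx1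
  have hQ2 : 0 < Complex.normSq x.2 := Complex.normSq_pos.2 hx2
  have hnormSq1 : Complex.normSq x.1 = ‖x.1‖^2 := by
    rw [Complex.sq_norm]
  have hnormSq2 : Complex.normSq x.2 = ‖x.2‖^2 := by
    rw [Complex.sq_norm]
  have hlogε : Real.log ε ≤ -E := by
    calc Real.log ε ≤ Real.log (Real.exp (-E)) :=
          Real.log_le_log hεpos (min_le_right _ _)
      _ = -E := Real.log_exp _
  have key : ∀ z : ℂ, z ≠ 0 → 0 < ‖z‖ → ‖z‖ < ε →
      Real.log (Complex.normSq z) < 0 ∧ 2*(p:ℝ)+1 ≤ Real.log (Real.log (Complex.normSq z)) := by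
    intro z hz h0 hlt
    have hQ : 0 < Complex.normSq z := Complex.normSq_pos.2 hz
    have hnz : Complex.normSq z = ‖z‖^2 := by rw [Complex.sq_norm]
    have hlt2 : Complex.normSq z < ε^2 := by
      rw [hnz]
      exact pow_lt_pow_left₀ hlt (norm_nonneg z) (by norm_num)
    have hS : Real.log (Complex.normSq z) < 2*(-E) := by
      calc Real.log (Complex.normSq z) < Real.log (ε^2) := Real.log_lt_log hQ hlt2
        _ = 2*Real.log ε := by
            rw [show ε^2 = ε*ε from sq ε, Real.log_mul (ne_of_gt hεpos) (ne_of_gt hεpos)]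
            ring
        _ ≤ 2*(-E) := by linarith
    have hSneg : Real.log (Complex.normSq z) < 0 := by linarith
    constructor
    · exact hSneg
    · have hla : Real.log (Real.log (Complex.normSq z))
          = Real.log (-(Real.log (Complex.normSq z))) := by
        rw [Real.log_neg_eq_log]
      rw [hla]
      have hgt : E < -(Real.log (Complex.normSq z)) := by linarith
      calc 2*(p:ℝ)+1 = Real.log E := by rw [hEdef, Real.log_exp]
        _ ≤ Real.log (-(Real.log (Complex.normSq z))) :=
            le_of_lt (Real.log_lt_log hEpos hgt)
  obtain ⟨hS1neg, hL1⟩ := key x.1 hx1 h1 h2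
  obtain ⟨hS2neg, hL2⟩ := key x.2 hx2 h3 h4
  have hS1 : Real.log (Complex.normSq x.1) ≠ 0 := ne_of_lt hS1neg
  have hS2 : Real.log (Complex.normSq x.2) ≠ 0 := ne_of_lt hS2neg
  -- compute the two second derivatives
  rw [leviForm2, path_eq p x v hQ1 hS1 hQ2 hS2, path_eq p x (Complex.I • v) hQ1 hS1 hQ2 hS2]
  have e1 : (Complex.I • v).1 = Complex.I • v.1 := rfl
  have e2 : (Complex.I • v).2 = Complex.I • v.2 := rfl
  rw [e1, e2, coef_I_b, coef_I_b, coef_I_n, coef_I_n]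
  exact final_ineq p hp (Complex.normSq x.1) (Complex.normSq x.2)
    (2*(x.1*(starRingEnd ℂ) v.1).re) (2*(x.1*(starRingEnd ℂ) v.1).im)
    (2*(x.2*(starRingEnd ℂ) v.2).re) (2*(x.2*(starRingEnd ℂ) v.2).im)
    (Complex.normSq v.1) (Complex.normSq v.2)
    hQ1 hQ2 hS1neg hS2neg hL1 hL2 (coef_sq x.1 v.1) (coef_sq x.2 v.2)
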